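/- Let d ∈ {2,3}, let ρ > 0 and a > 0 be real numbers, and let v, H ∈ ℝ^d. Then the (2d+2)×(2d+2) real matrix A₀(U) is symmetric positive definite, and for each i = 1,…,d the matrix A_i(U) is symmetric. -/

import Mathlib

open Matrix

/-- Index type for the `(2d+2) × (2d+2)` matrices of the symmetrized ideal compressible MHD
system, with blocks of sizes `1, d, d, 1` (total pressure, velocity, magnetic field, entropy). -/
abbrev MHDIdx (d : ℕ) := Unit ⊕ Fin d ⊕ Fin d ⊕ Unit

/-- The matrix `A₀(U)` of the symmetrized ideal compressible MHD system. -/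
noncomputable def mhdA0 (d : ℕ) (ρ a : ℝ) (H : Fin d → ℝ) :
    Matrix (MHDIdx d) (MHDIdx d) ℝ :=
  Matrix.of fun p q =>
    match p, q with
    | Sum.inl _, Sum.inl _ => 1 / (ρ * a ^ 2)
    | Sum.inl _, Sum.inr (Sum.inr (Sum.inl j)) => -H j / (ρ * a ^ 2)
    | Sum.inr (Sum.inl i), Sum.inr (Sum.inl j) => ρ * (if i = j then 1 else 0)
    | Sum.inr (Sum.inr (Sum.inl i)), Sum.inl _ => -H i / (ρ * a ^ 2)
    | Sum.inr (Sum.inr (Sum.inl i)), Sum.inr (Sum.inr (Sum.inl j)) =>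
        (if i = j then 1 else 0) + H i * H j / (ρ * a ^ 2)
    | Sum.inr (Sum.inr (Sum.inr _)), Sum.inr (Sum.inr (Sum.inr _)) => 1
    | _, _ => 0

/-- The matrix `A_i(U)`, `i = 1, …, d`, of the symmetrized ideal compressible MHD system. -/
noncomputable def mhdAi (d : ℕ) (ρ a : ℝ) (v H : Fin d → ℝ) (i : Fin d) :
    Matrix (MHDIdx d) (MHDIdx d) ℝ :=
  Matrix.of fun p q =>
    match p, q with
    | Sum.inl _, Sum.inl _ => v i / (ρ * a ^ 2)
    | Sum.inl _, Sum.inr (Sum.inl j) => if i = j then 1 else 0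
    | Sum.inl _, Sum.inr (Sum.inr (Sum.inl j)) => -(v i * H j) / (ρ * a ^ 2)
    | Sum.inr (Sum.inl j), Sum.inl _ => if j = i then 1 else 0
    | Sum.inr (Sum.inl j), Sum.inr (Sum.inl k) => ρ * v i * (if j = k then 1 else 0)
    | Sum.inr (Sum.inl j), Sum.inr (Sum.inr (Sum.inl k)) => -H i * (if j = k then 1 else 0)
    | Sum.inr (Sum.inr (Sum.inl j)), Sum.inl _ => -(v i * H j) / (ρ * a ^ 2)
    | Sum.inr (Sum.inr (Sum.inl j)), Sum.inr (Sum.inl k) => -H i * (if j = k then 1 else 0)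
    | Sum.inr (Sum.inr (Sum.inl j)), Sum.inr (Sum.inr (Sum.inl k)) =>
        v i * (if j = k then 1 else 0) + v i * H j * H k / (ρ * a ^ 2)
    | Sum.inr (Sum.inr (Sum.inr _)), Sum.inr (Sum.inr (Sum.inr _)) => v i
    | _, _ => 0


lemma mhdA0_quad (d : ℕ) (ρ a : ℝ) (H : Fin d → ℝ) (x : MHDIdx d → ℝ) :
    dotProduct x ((mhdA0 d ρ a H) *ᵥ x) =
      (x (Sum.inl ()) - ∑ j, H j * x (Sum.inr (Sum.inr (Sum.inl j)))) ^ 2 / (ρ * a ^ 2)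
      + ρ * ∑ j, (x (Sum.inr (Sum.inl j))) ^ 2
      + ∑ j, (x (Sum.inr (Sum.inr (Sum.inl j)))) ^ 2
      + (x (Sum.inr (Sum.inr (Sum.inr ())))) ^ 2 := by
  have hS2 : (x (Sum.inl ()) - ∑ j, H j * x (Sum.inr (Sum.inr (Sum.inl j)))) ^ 2 / (ρ * a ^ 2)
      = x (Sum.inl ()) * (1 / (ρ * a ^ 2) * x (Sum.inl ()))
        - 2 * ((∑ j, H j * x (Sum.inr (Sum.inr (Sum.inl j)))) * (x (Sum.inl ()) / (ρ * a ^ 2)))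
        + (∑ j, H j * x (Sum.inr (Sum.inr (Sum.inl j)))) ^ 2 / (ρ * a ^ 2) := by ring
  have hkey : (∑ j, H j * x (Sum.inr (Sum.inr (Sum.inl j)))) ^ 2 / (ρ * a ^ 2)
      = ∑ j, ∑ i, x (Sum.inr (Sum.inr (Sum.inl j)))
          * (H j * H i / (ρ * a ^ 2) * x (Sum.inr (Sum.inr (Sum.inl i)))) := by
    rw [sq, Finset.sum_mul_sum, Finset.sum_div]
    refine Finset.sum_congr rfl fun j _ => ?_
    rw [Finset.sum_div]
    exact Finset.sum_congr rfl fun k _ => by ring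
  have hlin : (∑ j, H j * x (Sum.inr (Sum.inr (Sum.inl j)))) * (x (Sum.inl ()) / (ρ * a ^ 2))
      = ∑ j, H j * x (Sum.inr (Sum.inr (Sum.inl j))) * (x (Sum.inl ()) / (ρ * a ^ 2)) :=
    Finset.sum_mul _ _ _
  have L1 : ∑ j, -(x (Sum.inl ()) * (H j / (ρ * a ^ 2) * x (Sum.inr (Sum.inr (Sum.inl j)))))
      = -∑ j, H j * x (Sum.inr (Sum.inr (Sum.inl j))) * (x (Sum.inl ()) / (ρ * a ^ 2)) := by
    rw [← Finset.sum_neg_distrib]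
    exact Finset.sum_congr rfl fun j _ => by ring
  have L2 : ∑ j, -(x (Sum.inr (Sum.inr (Sum.inl j))) * (H j / (ρ * a ^ 2) * x (Sum.inl ())))
      = -∑ j, H j * x (Sum.inr (Sum.inr (Sum.inl j))) * (x (Sum.inl ()) / (ρ * a ^ 2)) := by
    rw [← Finset.sum_neg_distrib]
    exact Finset.sum_congr rfl fun j _ => by ring
  have L3 : ∑ j, x (Sum.inr (Sum.inl j)) * (ρ * x (Sum.inr (Sum.inl j)))
      = ρ * ∑ j, (x (Sum.inr (Sum.inl j))) ^ 2 := by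
    rw [Finset.mul_sum]
    exact Finset.sum_congr rfl fun j _ => by ring
  have L4 : ∑ j, x (Sum.inr (Sum.inr (Sum.inl j))) * x (Sum.inr (Sum.inr (Sum.inl j)))
      = ∑ j, (x (Sum.inr (Sum.inr (Sum.inl j)))) ^ 2 :=
    Finset.sum_congr rfl fun j _ => by ring
  simp only [mulVec, dotProduct, Fintype.sum_sum_type, Fintype.sum_unique, mhdA0,
    Matrix.of_apply]
  simp only [mul_ite, ite_mul, mul_one, mul_zero, zero_mul, one_mul, add_mul, mul_add,
    Finset.sum_ite_eq, Finset.mem_univ, if_true, Finset.sum_add_distrib,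
    Finset.sum_const_zero, neg_mul, mul_neg, neg_div, add_zero, zero_add,
    Finset.mul_sum, Finset.sum_mul]
  rw [hS2, hkey, hlin, L1, L2, L3, L4]
  ring_nf
  rw [show (∑ j, x (Sum.inl default) * ρ⁻¹ * a⁻¹ ^ 2 * H j * x (Sum.inr (Sum.inr (Sum.inl j))))
      = ∑ j, H j * x (Sum.inr (Sum.inr (Sum.inl j))) * x (Sum.inl default) * ρ⁻¹ * a⁻¹ ^ 2
      from Finset.sum_congr rfl fun j _ => by ring, Finset.mul_sum]
  ring

lemma ite_swap_mhd {d : ℕ} (c : ℝ) (a b : Fin d) :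
    (if a = b then c else 0) = if b = a then c else 0 := by
  rcases eq_or_ne a b with rfl | h
  · rfl
  · simp [h, h.symm]

lemma mhdA0_symm (d : ℕ) (ρ a : ℝ) (H : Fin d → ℝ) : (mhdA0 d ρ a H).IsSymm := by
  ext p q
  rcases p with _ | p | p | _ <;> rcases q with _ | q | q | _ <;>
    simp [mhdA0, Matrix.transpose_apply]
  all_goals try ring
  all_goals (rcases eq_or_ne p q with rfl|h
             · (simp; try ring)
             · simp [h, h.symm]; try ring)

/-- `A₀(U)` is symmetric positive definite and each `A_i(U)` is symmetric. -/
theorem stmt0 (d : ℕ) (hd : d = 2 ∨ d = 3) (ρ a : ℝ) (hρ : 0 < ρ) (ha : 0 < a)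
    (v H : Fin d → ℝ) :
    (mhdA0 d ρ a H).IsSymm ∧ (mhdA0 d ρ a H).PosDef ∧
      ∀ i : Fin d, (mhdAi d ρ a v H i).IsSymm := by
  have hc : (0:ℝ) < ρ * a ^ 2 := by positivity
  refine ⟨mhdA0_symm d ρ a H, Matrix.posDef_iff_dotProduct_mulVec.mpr ⟨?_, ?_⟩, ?_⟩
  · -- Hermitian
    rw [Matrix.IsHermitian, Matrix.conjTranspose]
    ext i j
    simpa using congrFun (congrFun (show (mhdA0 d ρ a H)ᵀ = _ from mhdA0_symm d ρ a H) i) j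
  · intro x hx
    have hst : star x = x := by
      funext p; simp
    rw [hst, mhdA0_quad]
    obtain ⟨p, hp⟩ := Function.ne_iff.mp hx
    have T1 : 0 ≤ (x (Sum.inl ()) - ∑ j, H j * x (Sum.inr (Sum.inr (Sum.inl j)))) ^ 2 / (ρ * a ^ 2) :=
      div_nonneg (sq_nonneg _) hc.le
    have T2 : 0 ≤ ρ * ∑ j, (x (Sum.inr (Sum.inl j))) ^ 2 :=
      mul_nonneg hρ.le (Finset.sum_nonneg fun j _ => sq_nonneg _)
    have T3 : 0 ≤ ∑ j, (x (Sum.inr (Sum.inr (Sum.inl j)))) ^ 2 :=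
      Finset.sum_nonneg fun j _ => sq_nonneg _
    have T4 : 0 ≤ (x (Sum.inr (Sum.inr (Sum.inr ())))) ^ 2 := sq_nonneg _
    by_cases hh : ∀ j, x (Sum.inr (Sum.inr (Sum.inl j))) = 0
    · have hS : ∑ j, H j * x (Sum.inr (Sum.inr (Sum.inl j))) = 0 := by
        simp [hh]
      rcases p with _ | p | p | _
      · have : (0:ℝ) < (x (Sum.inl ()) - ∑ j, H j * x (Sum.inr (Sum.inr (Sum.inl j)))) ^ 2 / (ρ * a ^ 2) := by
          rw [hS, sub_zero]
          have hq : x (Sum.inl ()) ≠ 0 := by simpa using hp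
          positivity
        linarith
      · have : (0:ℝ) < ρ * ∑ j, (x (Sum.inr (Sum.inl j))) ^ 2 := by
          refine mul_pos hρ ?_
          have hle : (x (Sum.inr (Sum.inl p))) ^ 2 ≤ ∑ j, (x (Sum.inr (Sum.inl j))) ^ 2 :=
            Finset.single_le_sum (f := fun j => (x (Sum.inr (Sum.inl j))) ^ 2)
              (fun j _ => sq_nonneg _) (Finset.mem_univ p)
          have : 0 < (x (Sum.inr (Sum.inl p))) ^ 2 := by
            have hq : x (Sum.inr (Sum.inl p)) ≠ 0 := by simpa using hp
            positivity
          linarith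
        linarith
      · exact absurd (hh p) (by simpa using hp)
      · have : (0:ℝ) < (x (Sum.inr (Sum.inr (Sum.inr ())))) ^ 2 := by
          have hq : x (Sum.inr (Sum.inr (Sum.inr ()))) ≠ 0 := by simpa using hp
          positivity
        linarith
    · push_neg at hh
      obtain ⟨j, hj⟩ := hh
      have : (0:ℝ) < ∑ k, (x (Sum.inr (Sum.inr (Sum.inl k)))) ^ 2 := by
        have hle : (x (Sum.inr (Sum.inr (Sum.inl j)))) ^ 2 ≤ ∑ k, (x (Sum.inr (Sum.inr (Sum.inl k)))) ^ 2 :=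
          Finset.single_le_sum (f := fun k => (x (Sum.inr (Sum.inr (Sum.inl k)))) ^ 2)
            (fun k _ => sq_nonneg _) (Finset.mem_univ j)
        have : 0 < (x (Sum.inr (Sum.inr (Sum.inl j)))) ^ 2 := by positivity
        linarith
      linarith
  · intro i
    ext p q
    rcases p with _ | p | p | _ <;> rcases q with _ | q | q | _ <;>
      simp [mhdAi, Matrix.transpose_apply]
    all_goals try ring
    all_goals (rw [ite_swap_mhd]; try ring)
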